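/- arXiv:1906.00313 — 3 statements merged into one kernel-verified Lean document; each statement's English description precedes it below -/
import Mathlib

section
/- For independent random variables U with law P on ℝ^d (E‖U‖ < ∞) and Z ∼ N(0,σ²I), the density m(x) of U + Z satisfies ‖∇ log m(x)‖ ≤ (1/σ²)(‖x‖ + E‖U‖) for all x. -/
open MeasureTheory

/-- The isotropic Gaussian density of `N(0, σ²I)` on `ℝ^d`. -/
noncomputable def gaussPdf (d : ℕ) (σ : ℝ) (x : EuclideanSpace ℝ (Fin d)) : ℝ :=
  (2 * Real.pi * σ ^ 2) ^ (-(d : ℝ) / 2) * Real.exp (-‖x‖ ^ 2 / (2 * σ ^ 2))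

section aux
variable {d : ℕ} {σ : ℝ}

lemma gaussC_pos (hσ : 0 < σ) : 0 < (2 * Real.pi * σ ^ 2) ^ (-(d : ℝ) / 2) :=
  Real.rpow_pos_of_pos (by positivity) _

lemma gauss_pos (hσ : 0 < σ) (x : EuclideanSpace ℝ (Fin d)) : 0 < gaussPdf d σ x :=
  mul_pos (gaussC_pos hσ) (Real.exp_pos _)

lemma gauss_anti (hσ : 0 < σ) {s t : EuclideanSpace ℝ (Fin d)} (h : ‖s‖ ≤ ‖t‖) :
    gaussPdf d σ t ≤ gaussPdf d σ s := by
  unfold gaussPdf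
  have hC := gaussC_pos (d := d) hσ
  have : Real.exp (-‖t‖ ^ 2 / (2 * σ ^ 2)) ≤ Real.exp (-‖s‖ ^ 2 / (2 * σ ^ 2)) := by
    apply Real.exp_le_exp.2
    have h2 : (0:ℝ) < 2 * σ ^ 2 := by positivity
    have : -‖t‖ ^ 2 ≤ -‖s‖ ^ 2 := by nlinarith [norm_nonneg s, norm_nonneg t]
    gcongr
  nlinarith


lemma gauss_le (hσ : 0 < σ) (x : EuclideanSpace ℝ (Fin d)) :
    gaussPdf d σ x ≤ (2 * Real.pi * σ ^ 2) ^ (-(d : ℝ) / 2) := by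
  unfold gaussPdf
  have hx : -‖x‖^2/(2*σ^2) ≤ 0 :=
    div_nonpos_of_nonpos_of_nonneg (neg_nonpos.2 (sq_nonneg _)) (by positivity)
  nlinarith [Real.exp_le_one_iff.2 hx, gaussC_pos (d := d) hσ,
    Real.exp_pos (-‖x‖^2/(2*σ^2))]

lemma norm_mul_gauss_le (hσ : 0 < σ) (x : EuclideanSpace ℝ (Fin d)) :
    ‖x‖ * gaussPdf d σ x ≤ (2 * Real.pi * σ ^ 2) ^ (-(d : ℝ) / 2) * σ := by
  unfold gaussPdf
  rw [mul_comm ‖x‖, mul_assoc]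
  have hC := gaussC_pos (d := d) hσ
  apply mul_le_mul_of_nonneg_left ?_ hC.le
  -- exp(-r^2/(2σ^2)) * r ≤ σ
  have he : Real.exp (-‖x‖ ^ 2 / (2 * σ ^ 2)) = (Real.exp (‖x‖ ^ 2 / (2 * σ ^ 2)))⁻¹ := by
    rw [← Real.exp_neg]; ring_nf
  rw [he, inv_mul_le_iff₀ (Real.exp_pos _)]
  have h1 : ‖x‖^2/(2*σ^2) + 1 ≤ Real.exp (‖x‖^2/(2*σ^2)) := Real.add_one_le_exp _
  have h2 : (0:ℝ) < 2 * σ ^ 2 := by positivity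
  have key : ‖x‖ ≤ (‖x‖^2/(2*σ^2)+1)*σ := by
    rw [← sub_nonneg]
    have h3 : (‖x‖^2/(2*σ^2)+1)*σ - ‖x‖ = ((‖x‖-σ)^2+σ^2)/(2*σ) := by field_simp; ring
    rw [h3]; positivity
  nlinarith [mul_le_mul_of_nonneg_right h1 hσ.le]

end aux

section main
variable {d : ℕ} {σ : ℝ}

/-- pointwise gradient of the gaussian bump -/
lemma gauss_hasFDerivAt (hσ : 0 < σ) (a x : EuclideanSpace ℝ (Fin d)) :
    HasFDerivAt (fun x : EuclideanSpace ℝ (Fin d) => gaussPdf d σ (x - a))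
      (InnerProductSpace.toDual ℝ _ ((-(σ^2)⁻¹ * gaussPdf d σ (x - a)) • (x - a))) x := by
  have hq : HasFDerivAt (fun x : EuclideanSpace ℝ (Fin d) => ‖x - a‖ ^ 2)
      (2 • (innerSL ℝ (x - a)).comp (ContinuousLinearMap.id ℝ _)) x := by
    simpa using ((hasFDerivAt_id x).sub_const a).norm_sq
  set C := (2 * Real.pi * σ ^ 2) ^ (-(d : ℝ) / 2) with hC
  have hout : HasDerivAt (fun s : ℝ => C * Real.exp (-s / (2 * σ ^ 2)))
      (Real.exp (-(‖x - a‖^2) / (2 * σ ^ 2)) * (-1 / (2 * σ ^ 2)) * C) (‖x - a‖^2) := by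
    have h1 : HasDerivAt (fun s : ℝ => -s / (2 * σ ^ 2)) (-1 / (2 * σ ^ 2)) (‖x-a‖^2) :=
      (hasDerivAt_neg' _).div_const _
    simpa [mul_comm] using (h1.exp.const_mul C)
  have hcomp := hout.comp_hasFDerivAt x hq
  have heq : (fun s : ℝ => C * Real.exp (-s / (2 * σ ^ 2))) ∘
      (fun x : EuclideanSpace ℝ (Fin d) => ‖x - a‖ ^ 2)
      = fun x : EuclideanSpace ℝ (Fin d) => gaussPdf d σ (x - a) := by
    funext y; simp [gaussPdf, Function.comp, hC]
  rw [heq] at hcomp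
  refine hcomp.congr_fderiv (Eq.symm ?_)
  ext w
  have h2 : (0:ℝ) < 2 * σ ^ 2 := by positivity
  simp only [InnerProductSpace.toDual_apply_apply, ContinuousLinearMap.smul_apply,
    ContinuousLinearMap.coe_comp', Function.comp_apply, ContinuousLinearMap.coe_id', id_eq,
    innerSL_apply_apply, smul_eq_mul, real_inner_smul_left, gaussPdf]
  rw [hC]
  field_simp
  ring

variable (P : Measure (EuclideanSpace ℝ (Fin d))) [IsProbabilityMeasure P]

lemma cont_gauss (x : EuclideanSpace ℝ (Fin d)) :
    Continuous fun a : EuclideanSpace ℝ (Fin d) => gaussPdf d σ (x - a) := by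
  unfold gaussPdf
  fun_prop

lemma integrable_gauss (hσ : 0 < σ) (x : EuclideanSpace ℝ (Fin d)) :
    Integrable (fun a => gaussPdf d σ (x - a)) P := by
  refine Integrable.mono' (integrable_const ((2 * Real.pi * σ ^ 2) ^ (-(d : ℝ) / 2)))
    (cont_gauss x).aestronglyMeasurable ?_
  filter_upwards with a
  rw [Real.norm_of_nonneg (gauss_pos hσ _).le]
  exact gauss_le hσ _

lemma cont_v (x : EuclideanSpace ℝ (Fin d)) :
    Continuous fun a : EuclideanSpace ℝ (Fin d) =>
      ((-(σ^2)⁻¹ * gaussPdf d σ (x - a)) • (x - a)) := by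
  have := cont_gauss (σ := σ) x
  fun_prop

lemma norm_v_le (hσ : 0 < σ) (x a : EuclideanSpace ℝ (Fin d)) :
    ‖(-(σ^2)⁻¹ * gaussPdf d σ (x - a)) • (x - a)‖
      ≤ (σ^2)⁻¹ * ((2 * Real.pi * σ ^ 2) ^ (-(d : ℝ) / 2) * σ) := by
  rw [norm_smul, Real.norm_eq_abs, abs_mul, abs_neg, abs_inv, abs_of_nonneg (sq_nonneg σ),
    abs_of_nonneg (gauss_pos hσ _).le, mul_assoc]
  have h := norm_mul_gauss_le hσ (x - a)
  have h2 : (0:ℝ) < (σ^2)⁻¹ := by positivity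
  exact mul_le_mul_of_nonneg_left (by linarith [h, mul_comm (gaussPdf d σ (x-a)) ‖x-a‖] ) h2.le

lemma integrable_v (hσ : 0 < σ) (x : EuclideanSpace ℝ (Fin d)) :
    Integrable (fun a => ((-(σ^2)⁻¹ * gaussPdf d σ (x - a)) • (x - a))) P := by
  refine Integrable.mono' (integrable_const ((σ^2)⁻¹ * ((2 * Real.pi * σ ^ 2) ^ (-(d : ℝ) / 2) * σ)))
    (cont_v x).aestronglyMeasurable ?_
  filter_upwards with a using norm_v_le hσ x a

lemma m_hasGradientAt (hσ : 0 < σ) (x : EuclideanSpace ℝ (Fin d)) :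
    HasGradientAt (fun x => ∫ a, gaussPdf d σ (x - a) ∂P)
      (∫ a, ((-(σ^2)⁻¹ * gaussPdf d σ (x - a)) • (x - a)) ∂P) x := by
  rw [hasGradientAt_iff_hasFDerivAt]
  have key : HasFDerivAt (fun x => ∫ a, gaussPdf d σ (x - a) ∂P)
      (∫ a, InnerProductSpace.toDual ℝ _ ((-(σ^2)⁻¹ * gaussPdf d σ (x - a)) • (x - a)) ∂P) x := by
    apply hasFDerivAt_integral_of_dominated_of_fderiv_le (Metric.ball_mem_nhds x one_pos)
      (F' := fun (y : EuclideanSpace ℝ (Fin d)) a =>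
        InnerProductSpace.toDual ℝ _ ((-(σ^2)⁻¹ * gaussPdf d σ (y - a)) • (y - a)))
      (bound := fun _ => (σ^2)⁻¹ * ((2 * Real.pi * σ ^ 2) ^ (-(d : ℝ) / 2) * σ))
    · filter_upwards with y using (cont_gauss y).aestronglyMeasurable
    · exact integrable_gauss P hσ x
    · exact (((InnerProductSpace.toDual ℝ _).continuous).comp (cont_v x)).aestronglyMeasurable
    · filter_upwards with a y _
      rw [LinearIsometryEquiv.norm_map]
      exact norm_v_le hσ y a
    · exact integrable_const _
    · filter_upwards with a y _ using gauss_hasFDerivAt hσ a y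
  refine key.congr_fderiv (Eq.symm ?_)
  refine ContinuousLinearMap.ext fun w => ?_
  rw [ContinuousLinearMap.integral_apply]
  · rw [InnerProductSpace.toDual_apply_apply, real_inner_comm,
      ← integral_inner (integrable_v P hσ x) w]
    congr 1; funext a
    rw [InnerProductSpace.toDual_apply_apply, real_inner_comm]
  · refine Integrable.mono' (μ := P)
      (integrable_const ((σ^2)⁻¹ * ((2 * Real.pi * σ ^ 2) ^ (-(d : ℝ) / 2) * σ)))
      (((InnerProductSpace.toDual ℝ _).continuous).comp (cont_v x)).aestronglyMeasurable ?_
    filter_upwards with a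
    rw [LinearIsometryEquiv.norm_map]
    exact norm_v_le hσ x a

lemma integrable_f (hσ : 0 < σ) (x : EuclideanSpace ℝ (Fin d)) :
    Integrable (fun a => ‖x - a‖ * gaussPdf d σ (x - a)) P := by
  refine Integrable.mono' (integrable_const ((2 * Real.pi * σ ^ 2) ^ (-(d : ℝ) / 2) * σ))
    (((continuous_const.sub continuous_id).norm.mul (cont_gauss x)).aestronglyMeasurable) ?_
  filter_upwards with a
  rw [Real.norm_of_nonneg (mul_nonneg (norm_nonneg _) (gauss_pos hσ _).le)]
  exact norm_mul_gauss_le hσ _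

lemma key_ineq (hσ : 0 < σ) (hP1 : Integrable (fun y => ‖y‖) P)
    (x : EuclideanSpace ℝ (Fin d)) :
    ∫ a, ‖x - a‖ * gaussPdf d σ (x - a) ∂P
      ≤ (‖x‖ + ∫ a, ‖a‖ ∂P) * ∫ a, gaussPdf d σ (x - a) ∂P := by
  set h : EuclideanSpace ℝ (Fin d) → ℝ := fun a => gaussPdf d σ (x - a) with hh
  set f : EuclideanSpace ℝ (Fin d) → ℝ := fun a => ‖x - a‖ * gaussPdf d σ (x - a) with hf
  set A : ℝ := ∫ a, ‖a‖ ∂P with hA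
  set M : ℝ := ∫ a, h a ∂P with hM
  set F : ℝ := ∫ a, f a ∂P with hF
  have int_h := integrable_gauss P hσ x
  have int_f := integrable_f P hσ x
  have int_xn : Integrable (fun a : EuclideanSpace ℝ (Fin d) => ‖x‖ + ‖a‖) P :=
    (integrable_const ‖x‖).add hP1
  have hxA : (∫ a, (‖x‖ + ‖a‖) ∂P) = ‖x‖ + A := by
    rw [integral_add (integrable_const _) hP1, integral_const]
    simp [hA]
  have hpt : ∀ u u' : EuclideanSpace ℝ (Fin d),
      f u + f u' ≤ (‖x‖ + ‖u'‖) * h u + (‖x‖ + ‖u‖) * h u' := by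
    intro u u'
    have hu : 0 < h u := gauss_pos hσ _
    have hu' : 0 < h u' := gauss_pos hσ _
    have t1 : ‖x - u‖ ≤ ‖x‖ + ‖u‖ := norm_sub_le x u
    have t2 : ‖x - u'‖ ≤ ‖x‖ + ‖u'‖ := norm_sub_le x u'
    simp only [hf, hh]
    rcases le_or_gt ‖x - u‖ (‖x‖ + ‖u'‖) with h1 | h1
    · rcases le_or_gt ‖x - u'‖ (‖x‖ + ‖u‖) with h2 | h2
      · have k1 := mul_le_mul_of_nonneg_right h1 hu.le
        have k2 := mul_le_mul_of_nonneg_right h2 hu'.le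
        simp only [hf, hh] at k1 k2 ⊢
        linarith
      · have hle : h u' ≤ h u := gauss_anti hσ (le_trans t1 h2.le)
        have k1 : (‖x - u'‖ - ‖x‖ - ‖u‖) * h u' ≤ (‖x - u'‖ - ‖x‖ - ‖u‖) * h u :=
          mul_le_mul_of_nonneg_left hle (by linarith)
        have k2 : (‖x - u‖ - ‖x‖ - ‖u'‖ + (‖x - u'‖ - ‖x‖ - ‖u‖)) * h u ≤ 0 :=
          mul_nonpos_of_nonpos_of_nonneg (by linarith) hu.le
        simp only [hf, hh] at k1 k2 ⊢
        nlinarith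
    · have hle : h u ≤ h u' := gauss_anti hσ (le_trans t2 h1.le)
      have k1 : (‖x - u‖ - ‖x‖ - ‖u'‖) * h u ≤ (‖x - u‖ - ‖x‖ - ‖u'‖) * h u' :=
        mul_le_mul_of_nonneg_left hle (by linarith)
      have k2 : (‖x - u‖ - ‖x‖ - ‖u'‖ + (‖x - u'‖ - ‖x‖ - ‖u‖)) * h u' ≤ 0 :=
        mul_nonpos_of_nonpos_of_nonneg (by linarith) hu'.le
      simp only [hf, hh] at k1 k2 ⊢
      nlinarith
  have step1 : ∀ u' : EuclideanSpace ℝ (Fin d),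
      F + f u' ≤ (‖x‖ + ‖u'‖) * M + (‖x‖ + A) * h u' := by
    intro u'
    have hle : ∫ u, (f u + f u') ∂P ≤ ∫ u, ((‖x‖ + ‖u'‖) * h u + (‖x‖ + ‖u‖) * h u') ∂P := by
      refine integral_mono (int_f.add (integrable_const _))
        ((int_h.const_mul _).add (int_xn.mul_const _)) fun u => hpt u u'
    rwa [integral_add int_f (integrable_const _), integral_const,
      integral_add (int_h.const_mul _) (int_xn.mul_const _), integral_const_mul _ _,
      integral_mul_const _ _, hxA, smul_eq_mul, probReal_univ, one_mul] at hle
  have step2 : F + F ≤ (‖x‖ + A) * M + (‖x‖ + A) * M := by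
    have hle : ∫ u', (F + f u') ∂P ≤ ∫ u', ((‖x‖ + ‖u'‖) * M + (‖x‖ + A) * h u') ∂P :=
      integral_mono ((integrable_const _).add int_f)
        ((int_xn.mul_const _).add (int_h.const_mul _)) step1
    rwa [integral_add (integrable_const _) int_f, integral_const,
      integral_add (int_xn.mul_const _) (int_h.const_mul _), integral_mul_const _ _,
      integral_const_mul _ _, hxA, smul_eq_mul, probReal_univ, one_mul] at hle
  linarith
end main

/-- For `U ∼ P` on `ℝ^d` with `E‖U‖ < ∞` and independent `Z ∼ N(0,σ²I)`, the
density `m` of `U + Z` satisfies `‖∇ log m(x)‖ ≤ (1/σ²)(‖x‖ + E‖U‖)` for all `x`. -/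
theorem gradient_log_smoothed_density_bound
    {d : ℕ} (σ : ℝ) (hσ : 0 < σ)
    (P : Measure (EuclideanSpace ℝ (Fin d))) [IsProbabilityMeasure P]
    (hP1 : Integrable (fun y => ‖y‖) P)
    (m : EuclideanSpace ℝ (Fin d) → ℝ)
    (hm : ∀ x, m x = ∫ y, gaussPdf d σ (x - y) ∂P)
    (hm_pos : ∀ x, 0 < m x) :
    ∀ x, ‖gradient (fun y => Real.log (m y)) x‖
      ≤ (1 / σ ^ 2) * (‖x‖ + ∫ y, ‖y‖ ∂P) := by
  intro x
  have hm_fun : m = fun x => ∫ a, gaussPdf d σ (x - a) ∂P := funext hm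
  set G := ∫ a, ((-(σ^2)⁻¹ * gaussPdf d σ (x - a)) • (x - a)) ∂P with hG
  have hmg : HasGradientAt m G x := by rw [hm_fun]; exact m_hasGradientAt P hσ x
  have hlog : HasGradientAt (fun y => Real.log (m y)) ((m x)⁻¹ • G) x := by
    rw [hasGradientAt_iff_hasFDerivAt]
    have hfd : HasFDerivAt (fun y => Real.log (m y))
        ((m x)⁻¹ • (InnerProductSpace.toDual ℝ _ G)) x :=
      (Real.hasDerivAt_log (hm_pos x).ne').comp_hasFDerivAt x hmg.hasFDerivAt
    refine hfd.congr_fderiv (Eq.symm ?_)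
    ext w
    simp [real_inner_smul_left]
  rw [hlog.gradient]
  have hmx := hm_pos x
  have hnorm : ‖(m x)⁻¹ • G‖ = (m x)⁻¹ * ‖G‖ := by
    rw [norm_smul, Real.norm_eq_abs, abs_of_pos (inv_pos.2 hmx)]
  have hG_le : ‖G‖ ≤ (σ^2)⁻¹ * ∫ a, ‖x - a‖ * gaussPdf d σ (x - a) ∂P := by
    refine (norm_integral_le_integral_norm _).trans (le_of_eq ?_)
    rw [← integral_const_mul _ _]
    congr 1; funext a
    rw [norm_smul, Real.norm_eq_abs, abs_mul, abs_neg, abs_inv,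
      abs_of_nonneg (sq_nonneg σ), abs_of_nonneg (gauss_pos hσ _).le]
    ring
  have hkey := key_ineq P hσ hP1 x
  rw [← hm x] at hkey
  have hA : 0 ≤ ∫ a, ‖a‖ ∂P := integral_nonneg fun a => norm_nonneg a
  have hσ2 : (0:ℝ) < (σ^2)⁻¹ := by positivity
  rw [hnorm]
  have c1 : (m x)⁻¹ * ‖G‖ ≤ (m x)⁻¹ * ((σ^2)⁻¹ * ((‖x‖ + ∫ a, ‖a‖ ∂P) * m x)) := by
    apply mul_le_mul_of_nonneg_left ?_ (inv_pos.2 hmx).le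
    exact hG_le.trans (mul_le_mul_of_nonneg_left hkey hσ2.le)
  calc (m x)⁻¹ * ‖G‖ ≤ (m x)⁻¹ * ((σ^2)⁻¹ * ((‖x‖ + ∫ a, ‖a‖ ∂P) * m x)) := c1
    _ = (1 / σ ^ 2) * (‖x‖ + ∫ y, ‖y‖ ∂P) := by field_simp
end

section
/- In an RKHS H with strictly positive definite kernel k, the minimizer over r of ‖∫k(x,·)p(x)dx − ∫k(x,·)r(x)q(x)dx‖²_H restricted to functions determined by their values on finite samples {x_i^q} from q yields the closed-form empirical estimator r̂ = K_{q,q}^{-1} K_{q,p} 1, where K_{q,q} and K_{q,p} are Gram matrices between samples from q and between samples from q and p. -/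
/-- In an RKHS `H` with (strictly positive definite) kernel
`k x y = ⟪Φ x, Φ y⟫`, the minimizer over weight vectors `w` (the values of `r` on the
samples from `q`) of the empirical objective
`‖(1/n)∑ᵢ Φ(xpᵢ) − ∑ⱼ wⱼ • Φ(xqⱼ)‖²_H` is the closed-form estimator
`r̂ = K_{q,q}⁻¹ K_{q,p} 1`, where `1` is the all-ones vector scaled by `1/n`,
`(K_{q,q})_{ij} = k(xqᵢ, xqⱼ)`, `(K_{q,p})_{ij} = k(xqᵢ, xpⱼ)`, and `K_{q,q}` is positive
definite (hence invertible) since `k` is strictly positive definite and the samples are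
distinct. -/
theorem mmd_dre_closed_form
    {α : Type*} {H : Type*} [NormedAddCommGroup H] [InnerProductSpace ℝ H]
    (Φ : α → H) (k : α → α → ℝ)
    (hk : ∀ x y, k x y = inner ℝ (Φ x) (Φ y))
    (n m : ℕ) (hn : 0 < n)
    (xp : Fin n → α) (xq : Fin m → α)
    (Kqq : Matrix (Fin m) (Fin m) ℝ) (Kqp : Matrix (Fin m) (Fin n) ℝ)
    (hKqq : ∀ i j, Kqq i j = k (xq i) (xq j))
    (hKqp : ∀ i j, Kqp i j = k (xq i) (xp j))
    (hKqq_pd : Kqq.PosDef)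
    (rhat : Fin m → ℝ)
    (hrhat : rhat = Kqq⁻¹.mulVec (Kqp.mulVec fun _ => (1 : ℝ) / n)) :
    ∀ w : Fin m → ℝ,
      ‖(1 / (n : ℝ)) • (∑ i, Φ (xp i)) - ∑ j, rhat j • Φ (xq j)‖ ^ 2
        ≤ ‖(1 / (n : ℝ)) • (∑ i, Φ (xp i)) - ∑ j, w j • Φ (xq j)‖ ^ 2 := by
  intro w
  set μ := (1 / (n : ℝ)) • (∑ i, Φ (xp i)) with hμ
  set vh := ∑ j, rhat j • Φ (xq j) with hvh
  set v := ∑ j, w j • Φ (xq j) with hv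
  have hdet : IsUnit Kqq.det := isUnit_iff_ne_zero.mpr (ne_of_gt hKqq_pd.det_pos)
  have hKr : Kqq.mulVec rhat = Kqp.mulVec (fun _ => (1:ℝ)/n) := by
    rw [hrhat, Matrix.mulVec_mulVec, Matrix.mul_nonsing_inv _ hdet, Matrix.one_mulVec]
  have horth : ∀ j, inner ℝ (Φ (xq j)) (μ - vh) = (0:ℝ) := by
    intro j
    have h1 : inner ℝ (Φ (xq j)) μ = (Kqp.mulVec (fun _ => (1:ℝ)/n)) j := by
      simp only [hμ, inner_smul_right, inner_sum, Matrix.mulVec, dotProduct,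
        hKqp, hk]
      rw [Finset.mul_sum]
      refine Finset.sum_congr rfl fun i _ => ?_
      ring
    have h2 : inner ℝ (Φ (xq j)) vh = (Kqq.mulVec rhat) j := by
      simp only [hvh, inner_sum, inner_smul_right, Matrix.mulVec, dotProduct,
        hKqq, hk]
      refine Finset.sum_congr rfl fun i _ => ?_
      ring
    rw [inner_sub_right, h1, h2, hKr, sub_self]
  have horth2 : inner ℝ (μ - vh) (vh - v) = (0:ℝ) := by
    have hd : vh - v = ∑ j, (rhat j - w j) • Φ (xq j) := by
      rw [hvh, hv, ← Finset.sum_sub_distrib]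
      refine Finset.sum_congr rfl fun j _ => ?_
      rw [sub_smul]
    rw [hd, inner_sum]
    refine Finset.sum_eq_zero fun j _ => ?_
    rw [inner_smul_right, ← real_inner_comm, horth j, mul_zero]
  have key : μ - v = (μ - vh) + (vh - v) := by abel
  rw [key, norm_add_sq_real, horth2]
  nlinarith [sq_nonneg ‖vh - v‖]
end

section
/- Let P, Q be probability measures on ℝ^d with disjoint supports, and M̃ = αP∗N(0,σ²I) + (1−α)Q∗N(0,σ²I) with 0<α<1. Then for f(t)=t log t, B_f(P,Q|M̃) = D_KL(P‖Q) is infinite, yet each individual term ∫ f(p/m̃) dM̃ = D_KL-type integral of p against m̃ is finite whenever P has finite differential entropy and finite second moment. -/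
open MeasureTheory ENNReal Classical

/-- The Kullback–Leibler divergence `D_KL(P‖Q) ∈ [0,∞]`, with the convention that it is `⊤`
unless `P ≪ Q` and the log-likelihood ratio is integrable. -/
noncomputable def klDiv' {α : Type*} [MeasurableSpace α] (P Q : Measure α) : ℝ≥0∞ :=
  if P ≪ Q ∧ Integrable (fun x => Real.log (P.rnDeriv Q x).toReal) P then
    ENNReal.ofReal (∫ x, Real.log (P.rnDeriv Q x).toReal ∂P)
  else ⊤

lemma gaussPdf_pos {d : ℕ} {σ : ℝ} (hσ : 0 < σ) (x : EuclideanSpace ℝ (Fin d)) :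
    0 < gaussPdf d σ x := by
  unfold gaussPdf
  have h2 : (0:ℝ) < 2 * Real.pi * σ ^ 2 := by positivity
  exact mul_pos (Real.rpow_pos_of_pos h2 _) (Real.exp_pos _)

lemma gaussPdf_le {d : ℕ} {σ : ℝ} (hσ : 0 < σ) (x : EuclideanSpace ℝ (Fin d)) :
    gaussPdf d σ x ≤ (2 * Real.pi * σ ^ 2) ^ (-(d : ℝ) / 2) := by
  unfold gaussPdf
  have h2 : (0:ℝ) < 2 * Real.pi * σ ^ 2 := by positivity
  have hC : (0:ℝ) ≤ (2 * Real.pi * σ ^ 2) ^ (-(d : ℝ) / 2) :=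
    (Real.rpow_pos_of_pos h2 _).le
  have hexp : Real.exp (-‖x‖ ^ 2 / (2 * σ ^ 2)) ≤ 1 := by
    apply Real.exp_le_one_iff.2
    rw [neg_div]
    exact neg_nonpos.2 (by positivity)
  calc (2 * Real.pi * σ ^ 2) ^ (-(d : ℝ) / 2) * Real.exp (-‖x‖ ^ 2 / (2 * σ ^ 2))
      ≤ (2 * Real.pi * σ ^ 2) ^ (-(d : ℝ) / 2) * 1 := mul_le_mul_of_nonneg_left hexp hC
    _ = (2 * Real.pi * σ ^ 2) ^ (-(d : ℝ) / 2) := mul_one _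

lemma gaussPdf_cont {d : ℕ} {σ : ℝ} : Continuous (gaussPdf d σ) := by
  unfold gaussPdf
  fun_prop

lemma gaussPdf_lower {d : ℕ} {σ : ℝ} (hσ : 0 < σ) (x y : EuclideanSpace ℝ (Fin d)) :
    (2 * Real.pi * σ ^ 2) ^ (-(d : ℝ) / 2) * Real.exp (-‖x‖ ^ 2 / σ ^ 2)
      * Real.exp (-‖y‖ ^ 2 / σ ^ 2) ≤ gaussPdf d σ (x - y) := by
  unfold gaussPdf
  have h2 : (0:ℝ) < 2 * Real.pi * σ ^ 2 := by positivity
  rw [mul_assoc, ← Real.exp_add]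
  apply mul_le_mul_of_nonneg_left _ (Real.rpow_pos_of_pos h2 _).le
  apply Real.exp_le_exp.2
  have h1 : ‖x - y‖ ^ 2 ≤ 2 * ‖x‖ ^ 2 + 2 * ‖y‖ ^ 2 := by
    have hn := norm_sub_le x y
    nlinarith [norm_nonneg x, norm_nonneg y, norm_nonneg (x - y), sq_nonneg (‖x‖ - ‖y‖)]
  have key : -‖x - y‖ ^ 2 / (2 * σ ^ 2) - (-‖x‖ ^ 2 / σ ^ 2 + -‖y‖ ^ 2 / σ ^ 2)
      = (2 * ‖x‖ ^ 2 + 2 * ‖y‖ ^ 2 - ‖x - y‖ ^ 2) / (2 * σ ^ 2) := by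
    field_simp
    ring
  have hnn : (0:ℝ) ≤ (2 * ‖x‖ ^ 2 + 2 * ‖y‖ ^ 2 - ‖x - y‖ ^ 2) / (2 * σ ^ 2) :=
    div_nonneg (by linarith) (by positivity)
  linarith

/-- For `P, Q` with disjoint supports and
`M̃ = αP∗N(0,σ²I) + (1−α)Q∗N(0,σ²I)` (density `m̃`), with `f(t) = t log t` the scaled
Bregman divergence `B_f(P,Q|M̃) = D_KL(P‖Q)` is infinite; yet the individual term
`∫ f(p/m̃) dM̃ = ∫ p log(p/m̃)` is finite (integrable) whenever `P` has finite differential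
entropy and finite second moment. -/
theorem disjoint_support_KL_infinite_but_terms_finite
    {d : ℕ} (σ : ℝ) (hσ : 0 < σ)
    (P Q : Measure (EuclideanSpace ℝ (Fin d)))
    [IsProbabilityMeasure P] [IsProbabilityMeasure Q]
    (p q : EuclideanSpace ℝ (Fin d) → ℝ)
    (hp_nonneg : ∀ x, 0 ≤ p x) (hq_nonneg : ∀ x, 0 ≤ q x)
    (hp : P = volume.withDensity fun x => ENNReal.ofReal (p x))
    (hq : Q = volume.withDensity fun x => ENNReal.ofReal (q x))
    (hdisj : Disjoint (Function.support p) (Function.support q))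
    (hP_nonzero : P ≠ 0)
    (α : ℝ) (hα0 : 0 < α) (hα1 : α < 1)
    (mt : EuclideanSpace ℝ (Fin d) → ℝ)
    (hmt : ∀ x, mt x = α * (∫ y, gaussPdf d σ (x - y) ∂P)
      + (1 - α) * (∫ y, gaussPdf d σ (x - y) ∂Q))
    (h_entropy : Integrable (fun x => p x * Real.log (p x)))
    (h_moment : Integrable (fun x => ‖x‖ ^ 2 * p x)) :
    klDiv' P Q = ⊤
    ∧ Integrable (fun x => p x * Real.log (p x / mt x)) := by
  have hPlint : ∫⁻ x, ENNReal.ofReal (p x) = 1 := by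
    have h1 : P Set.univ = 1 := measure_univ
    rw [hp, withDensity_apply _ MeasurableSet.univ, Measure.restrict_univ] at h1
    exact h1
  constructor
  · -- KL divergence is infinite
    rw [klDiv', if_neg]
    rintro ⟨habs, -⟩
    have h1 : (0 : ℝ≥0∞) < ∫⁻ x, ENNReal.ofReal (p x) := by
      rw [hPlint]; exact zero_lt_one
    rw [MeasureTheory.lintegral_def, lt_iSup_iff] at h1
    obtain ⟨g, hg⟩ := h1
    rw [lt_iSup_iff] at hg
    obtain ⟨hgle, hgpos⟩ := hg
    have hA : MeasurableSet (Function.support g) := g.measurableSet_support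
    have hQA : Q (Function.support g) = 0 := by
      rw [hq, withDensity_apply _ hA]
      have h0 : ∫⁻ x in Function.support g, ENNReal.ofReal (q x) ∂volume
          = ∫⁻ x in Function.support g, 0 ∂volume := by
        refine setLIntegral_congr_fun hA (fun x hx => ?_)
        have hgx : g x ≠ 0 := Function.mem_support.mp hx
        have hpx : x ∈ Function.support p := by
          rw [Function.mem_support]
          intro h0
          exact hgx (le_antisymm (by simpa [h0] using hgle x) zero_le)
        have hqx : q x = 0 := Function.notMem_support.mp (Set.disjoint_left.mp hdisj hpx)
        simp [hqx]
      simpa using h0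
    have hPA : P (Function.support g) = 0 := habs hQA
    have hPA' : g.lintegral volume ≤ P (Function.support g) := by
      rw [hp, withDensity_apply _ hA]
      calc g.lintegral volume = ∫⁻ x, g x ∂volume := (g.lintegral_eq_lintegral volume).symm
        _ = ∫⁻ x in Function.support g, g x ∂volume := by
            rw [← lintegral_indicator hA]
            congr 1
            funext x
            by_cases hx : x ∈ Function.support g
            · rw [Set.indicator_of_mem hx]
            · rw [Set.indicator_of_notMem hx]
              exact Function.notMem_support.mp hx
        _ ≤ ∫⁻ x in Function.support g, ENNReal.ofReal (p x) ∂volume := lintegral_mono hgle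
    rw [hPA] at hPA'
    exact absurd (le_antisymm hPA' zero_le) (ne_of_gt hgpos)
  · -- the individual term is finite
    set C : ℝ := (2 * Real.pi * σ ^ 2) ^ (-(d : ℝ) / 2) with hCdef
    have hCpos : 0 < C := Real.rpow_pos_of_pos (by positivity) _
    -- measurability of mt
    have hcont : Continuous fun z : EuclideanSpace ℝ (Fin d) × EuclideanSpace ℝ (Fin d) =>
        gaussPdf d σ (z.1 - z.2) := gaussPdf_cont.comp (continuous_fst.sub continuous_snd)
    have hmt_meas : AEStronglyMeasurable mt (volume : Measure (EuclideanSpace ℝ (Fin d))) := by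
      have h1 : StronglyMeasurable fun x => ∫ y, gaussPdf d σ (x - y) ∂P :=
        hcont.stronglyMeasurable.integral_prod_right'
      have h2 : StronglyMeasurable fun x => ∫ y, gaussPdf d σ (x - y) ∂Q :=
        hcont.stronglyMeasurable.integral_prod_right'
      have hmt' : mt = fun x => α * (∫ y, gaussPdf d σ (x - y) ∂P)
          + (1 - α) * (∫ y, gaussPdf d σ (x - y) ∂Q) := funext hmt
      rw [hmt']
      exact ((stronglyMeasurable_const.mul h1).add
        (stronglyMeasurable_const.mul h2)).aestronglyMeasurable
    -- integrability of the Gaussian kernel against probability measures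
    have hIg : ∀ (μ : Measure (EuclideanSpace ℝ (Fin d))) [IsProbabilityMeasure μ]
        (x : EuclideanSpace ℝ (Fin d)), Integrable (fun y => gaussPdf d σ (x - y)) μ := by
      intro μ _ x
      refine Integrable.mono' (integrable_const C) ?_ (ae_of_all _ fun y => ?_)
      · exact (gaussPdf_cont.comp (continuous_const.sub continuous_id)).aestronglyMeasurable
      · rw [Real.norm_of_nonneg (gaussPdf_pos hσ _).le]
        exact gaussPdf_le hσ _
    set c₀ : ℝ := ∫ y, Real.exp (-‖y‖ ^ 2 / σ ^ 2) ∂P with hc0def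
    have hc0_int : Integrable (fun y : EuclideanSpace ℝ (Fin d) =>
        Real.exp (-‖y‖ ^ 2 / σ ^ 2)) P := by
      refine Integrable.mono' (integrable_const 1) ?_ (ae_of_all _ fun y => ?_)
      · apply Continuous.aestronglyMeasurable; fun_prop
      · rw [Real.norm_of_nonneg (Real.exp_pos _).le]
        apply Real.exp_le_one_iff.2
        rw [neg_div]
        exact neg_nonpos.2 (by positivity)
    have hc0_pos : 0 < c₀ := by
      rw [hc0def]
      refine (integral_pos_iff_support_of_nonneg_ae
        (ae_of_all _ fun y => (Real.exp_pos _).le) hc0_int).2 ?_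
      have hsupp : (Function.support fun y : EuclideanSpace ℝ (Fin d) =>
          Real.exp (-‖y‖ ^ 2 / σ ^ 2)) = Set.univ := by
        ext y; simp [Function.mem_support, Real.exp_ne_zero]
      rw [hsupp]
      simp
    -- lower bound on mt
    have hmt_lb : ∀ x, α * C * c₀ * Real.exp (-‖x‖ ^ 2 / σ ^ 2) ≤ mt x := by
      intro x
      rw [hmt x]
      have hQpart : 0 ≤ (1 - α) * ∫ y, gaussPdf d σ (x - y) ∂Q :=
        mul_nonneg (by linarith) (integral_nonneg fun y => (gaussPdf_pos hσ _).le)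
      have hpt : ∀ y, C * Real.exp (-‖x‖ ^ 2 / σ ^ 2) * Real.exp (-‖y‖ ^ 2 / σ ^ 2)
          ≤ gaussPdf d σ (x - y) := fun y => gaussPdf_lower hσ x y
      have hPpart : C * Real.exp (-‖x‖ ^ 2 / σ ^ 2) * c₀ ≤ ∫ y, gaussPdf d σ (x - y) ∂P := by
        calc C * Real.exp (-‖x‖ ^ 2 / σ ^ 2) * c₀
            = ∫ y, C * Real.exp (-‖x‖ ^ 2 / σ ^ 2) * Real.exp (-‖y‖ ^ 2 / σ ^ 2) ∂P := by
              rw [integral_const_mul]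
          _ ≤ ∫ y, gaussPdf d σ (x - y) ∂P :=
              integral_mono (hc0_int.const_mul _) (hIg P x) hpt
      calc α * C * c₀ * Real.exp (-‖x‖ ^ 2 / σ ^ 2)
          = α * (C * Real.exp (-‖x‖ ^ 2 / σ ^ 2) * c₀) := by ring
        _ ≤ α * ∫ y, gaussPdf d σ (x - y) ∂P := mul_le_mul_of_nonneg_left hPpart hα0.le
        _ ≤ _ := le_add_of_nonneg_right hQpart
    have hmt_pos : ∀ x, 0 < mt x := fun x =>
      lt_of_lt_of_le (by positivity) (hmt_lb x)
    -- upper bound on mt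
    have hmt_ub : ∀ x, mt x ≤ C := by
      intro x
      rw [hmt x]
      have h1 : (∫ y, gaussPdf d σ (x - y) ∂P) ≤ C := by
        calc (∫ y, gaussPdf d σ (x - y) ∂P)
            ≤ ∫ _, C ∂P := integral_mono (hIg P x) (integrable_const C)
              (fun y => gaussPdf_le hσ _)
          _ = C := by simp
      have h2 : (∫ y, gaussPdf d σ (x - y) ∂Q) ≤ C := by
        calc (∫ y, gaussPdf d σ (x - y) ∂Q)
            ≤ ∫ _, C ∂Q := integral_mono (hIg Q x) (integrable_const C)
              (fun y => gaussPdf_le hσ _)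
          _ = C := by simp
      have h1' := mul_le_mul_of_nonneg_left h1 hα0.le
      have h2' := mul_le_mul_of_nonneg_left h2 (by linarith : (0:ℝ) ≤ 1 - α)
      linarith
    -- a.e.-measurability of p
    have hp_aem : AEMeasurable p (volume : Measure (EuclideanSpace ℝ (Fin d))) := by
      rcases Nat.eq_zero_or_pos d with hd | hd
      · subst hd
        exact Subsingleton.measurable.aemeasurable
      · haveI : Nontrivial (EuclideanSpace ℝ (Fin d)) := by
          refine ⟨⟨EuclideanSpace.single ⟨0, hd⟩ 1, 0, ?_⟩⟩
          intro h
          have := congrArg (fun f : EuclideanSpace ℝ (Fin d) => f ⟨0, hd⟩) h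
          simp at this
        have h0 : (volume : Measure (EuclideanSpace ℝ (Fin d)))
            {(0 : EuclideanSpace ℝ (Fin d))} = 0 := measure_singleton 0
        have hae : ∀ᵐ x : EuclideanSpace ℝ (Fin d), x ≠ (0 : EuclideanSpace ℝ (Fin d)) := by
          rw [ae_iff]
          simpa using h0
        have hw : AEMeasurable
            (fun x : EuclideanSpace ℝ (Fin d) => (‖x‖ ^ 2)⁻¹ * (‖x‖ ^ 2 * p x)) volume :=
          ((measurable_norm.pow measurable_const).aemeasurable).inv.mul h_moment.aemeasurable
        refine hw.congr ?_
        filter_upwards [hae] with x hx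
        have hn : ‖x‖ ^ 2 ≠ 0 := pow_ne_zero _ (norm_ne_zero_iff.2 hx)
        field_simp
    have hp_int : Integrable p (volume : Measure (EuclideanSpace ℝ (Fin d))) := by
      refine ⟨hp_aem.aestronglyMeasurable, ?_⟩
      rw [hasFiniteIntegral_iff_ofReal (ae_of_all _ hp_nonneg)]
      rw [hPlint]
      exact one_lt_top
    -- bound on |log (mt x)|
    set K : ℝ := |Real.log C| + |Real.log (α * C * c₀)| with hKdef
    have hlog_bd : ∀ x, |Real.log (mt x)| ≤ K + ‖x‖ ^ 2 / σ ^ 2 := by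
      intro x
      have hxnn : (0:ℝ) ≤ ‖x‖ ^ 2 / σ ^ 2 := by positivity
      rw [abs_le]
      constructor
      · have hlb : Real.log (α * C * c₀) - ‖x‖ ^ 2 / σ ^ 2 ≤ Real.log (mt x) := by
          have h1 : Real.log (α * C * c₀ * Real.exp (-‖x‖ ^ 2 / σ ^ 2)) ≤ Real.log (mt x) :=
            Real.log_le_log (by positivity) (hmt_lb x)
          rw [Real.log_mul (by positivity) (Real.exp_ne_zero _), Real.log_exp, neg_div] at h1
          linarith
        have := neg_abs_le (Real.log (α * C * c₀))
        have hK1 : (0:ℝ) ≤ |Real.log C| := abs_nonneg _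
        linarith
      · have hub : Real.log (mt x) ≤ Real.log C := Real.log_le_log (hmt_pos x) (hmt_ub x)
        have := le_abs_self (Real.log C)
        have hK2 : (0:ℝ) ≤ |Real.log (α * C * c₀)| := abs_nonneg _
        linarith
    -- integrability of p * log mt
    have hint2 : Integrable (fun x => p x * Real.log (mt x))
        (volume : Measure (EuclideanSpace ℝ (Fin d))) := by
      refine Integrable.mono'
        (g := fun x => K * p x + (σ ^ 2)⁻¹ * (‖x‖ ^ 2 * p x))
        ((hp_int.const_mul K).add (h_moment.const_mul _)) ?_ (ae_of_all _ fun x => ?_)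
      · exact (hp_aem.mul
          (Real.measurable_log.comp_aemeasurable hmt_meas.aemeasurable)).aestronglyMeasurable
      · rw [Real.norm_eq_abs, abs_mul, abs_of_nonneg (hp_nonneg x)]
        calc p x * |Real.log (mt x)|
            ≤ p x * (K + ‖x‖ ^ 2 / σ ^ 2) :=
              mul_le_mul_of_nonneg_left (hlog_bd x) (hp_nonneg x)
          _ = K * p x + (σ ^ 2)⁻¹ * (‖x‖ ^ 2 * p x) := by
              field_simp
    have key : (fun x => p x * Real.log (p x / mt x))
        = fun x => p x * Real.log (p x) - p x * Real.log (mt x) := by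
      funext x
      by_cases hx : p x = 0
      · simp [hx]
      · rw [Real.log_div hx (hmt_pos x).ne', mul_sub]
    rw [key]
    exact h_entropy.sub hint2
end
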